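/- Let a, b ∈ ℂ and let Q be the ℂ-linear operator on the field of formal Laurent series ℂ((t)) determined by: for every Laurent series f, the coefficient of tⁿ in Q(f) equals a times the coefficient of tⁿ in f when n ≥ 0, and equals b times the coefficient of tⁿ in f when n < 0 (i.e., Q = aP₊ + bP₋ where P₊ projects onto the part with nonnegative exponents and P₋ projects onto the part with negative exponents). Then Q is an extended Rota-Baxter operator of weight (-(a+b), ab) on ℂ((t)). -/

import Mathlib

/-- A `k`-linear operator `P` on a `k`-algebra `R` is an extended Rota-Baxter operator of
weight `(lam, kap)` if `P x * P y = P (x * P y) + P (P x * y) + lam • P (x*y) + kap • (x*y)`. -/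
def IsExtRB {k : Type*} [CommRing k] {R : Type*} [Ring R] [Algebra k R]
    (lam kap : k) (P : R →ₗ[k] R) : Prop :=
  ∀ x y : R, P x * P y = P (x * P y) + P (P x * y) + lam • P (x * y) + kap • (x * y)

/-- Coefficient of a product as a sum over a possibly larger antidiagonal. -/
lemma coeff_mul_subset (x y f g : LaurentSeries ℂ)
    (hx : x.support ⊆ f.support) (hy : y.support ⊆ g.support) (n : ℤ) :
    (x * y).coeff n = ∑ ij ∈ Finset.antidiagonal f.isPWO_support g.isPWO_support n,
      x.coeff ij.1 * y.coeff ij.2 := by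
  rw [HahnSeries.coeff_mul]
  apply Finset.sum_subset
  · intro ij hij
    rw [Finset.mem_antidiagonal] at hij ⊢
    exact ⟨hx hij.1, hy hij.2.1, hij.2.2⟩
  · intro ij hij hij'
    rw [Finset.mem_antidiagonal] at hij hij'
    push_neg at hij'
    by_cases h1 : x.coeff ij.1 = 0
    · simp [h1]
    · have h2 : ij.2 ∉ Function.support y.coeff := by
        intro h
        exact hij' h1 h hij.2.2
      simp only [Function.mem_support, not_not] at h2
      simp [h2]

/-- The operator `Q = a·P₊ + b·P₋` on formal Laurent series over `ℂ`, which multiplies the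
coefficients in nonnegative degrees by `a` and those in negative degrees by `b`, is an
extended Rota-Baxter operator of weight `(-(a+b), ab)`. -/
theorem stmt9 (a b : ℂ)
    (Q : @LinearMap ℂ ℂ _ _ (RingHom.id ℂ) (LaurentSeries ℂ) (LaurentSeries ℂ) _ _
      Algebra.toModule Algebra.toModule)
    (hQ : ∀ (f : LaurentSeries ℂ) (n : ℤ),
      (Q f).coeff n = if 0 ≤ n then a * f.coeff n else b * f.coeff n) :
    IsExtRB (-(a + b)) (a * b) Q := by
  set q : ℤ → ℂ := fun i => if 0 ≤ i then a else b with hq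
  have hQ' : ∀ (f : LaurentSeries ℂ) (n : ℤ), (Q f).coeff n = q n * f.coeff n := by
    intro f n
    rw [hQ]
    simp only [hq]
    split_ifs <;> rfl
  have hsupp : ∀ f : LaurentSeries ℂ, (Q f).support ⊆ f.support := by
    intro f i hi
    rw [HahnSeries.mem_support] at hi ⊢
    intro h
    rw [hQ' f i, h, mul_zero] at hi
    exact hi rfl
  intro f g
  have halg : ∀ c : ℂ, algebraMap ℂ (HahnSeries ℤ ℂ) c = HahnSeries.C c := fun c => by
    rw [HahnSeries.algebraMap_apply']
    simp [PowerSeries.algebraMap_apply, HahnSeries.ofPowerSeries_C]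
  rw [Algebra.smul_def, Algebra.smul_def, halg, halg]
  ext n
  simp only [HahnSeries.coeff_add, Algebra.algebraMap_self, RingHom.id_apply,
    HahnSeries.C_apply, HahnSeries.coeff_single_zero_mul, hQ']
  rw [coeff_mul_subset (Q f) (Q g) f g (hsupp f) (hsupp g) n,
      coeff_mul_subset f (Q g) f g (subset_refl _) (hsupp g) n,
      coeff_mul_subset (Q f) g f g (hsupp f) (subset_refl _) n,
      coeff_mul_subset f g f g (subset_refl _) (subset_refl _) n]
  simp only [Finset.mul_sum, ← Finset.sum_add_distrib]
  apply Finset.sum_congr rfl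
  intro ij hij
  rw [Finset.mem_antidiagonal] at hij
  obtain ⟨-, -, hn⟩ := hij
  obtain ⟨i, j⟩ := ij
  simp only at hn
  simp only [hQ', smul_eq_mul, ← hn, hq]
  split_ifs <;> first | omega | ring
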